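/- The total-flow map F(x, y) = (t(x,y), t(y,x)) with t(x, y) = τ (1 + α ((x + y)/c)^β), τ, α, c > 0, β ≥ 1, is a monotone operator on [0, ∞)²: for all (x₁, y₁), (x₂, y₂) ∈ [0, ∞)², ⟨F(x₁,y₁) − F(x₂,y₂), (x₁,y₁) − (x₂,y₂)⟩ ≥ 0. -/

import Mathlib

/-- the bidirectional travel-time map F(x,y) = (t(x,y), t(y,x)) with the
symmetric pVDF is a monotone operator on [0,∞)². -/
theorem symmetric_pVDF_monotone_operator (τ α β c : ℝ) (hτ : 0 < τ) (hα : 0 < α)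
    (hβ : 1 ≤ β) (hc : 0 < c) (t : ℝ → ℝ → ℝ)
    (ht : ∀ x y : ℝ, t x y = τ * (1 + α * (((x + y) / c) ^ β))) :
    ∀ x₁ y₁ x₂ y₂ : ℝ, 0 ≤ x₁ → 0 ≤ y₁ → 0 ≤ x₂ → 0 ≤ y₂ →
      0 ≤ (t x₁ y₁ - t x₂ y₂) * (x₁ - x₂) + (t y₁ x₁ - t y₂ x₂) * (y₁ - y₂) := by
  intro x₁ y₁ x₂ y₂ hx₁ hy₁ hx₂ hy₂
  set s₁ : ℝ := (x₁ + y₁) / c with hs₁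
  set s₂ : ℝ := (x₂ + y₂) / c with hs₂
  have hs₁0 : 0 ≤ s₁ := div_nonneg (by linarith) hc.le
  have hs₂0 : 0 ≤ s₂ := div_nonneg (by linarith) hc.le
  have key : 0 ≤ (s₁ ^ β - s₂ ^ β) * (s₁ - s₂) := by
    rcases le_total s₂ s₁ with h | h
    · exact mul_nonneg (sub_nonneg.2 (Real.rpow_le_rpow hs₂0 h (by linarith)))
        (sub_nonneg.2 h)
    · have h1 : s₁ ^ β ≤ s₂ ^ β := Real.rpow_le_rpow hs₁0 h (by linarith)
      nlinarith
  have hdiff : (x₁ - x₂) + (y₁ - y₂) = c * (s₁ - s₂) := by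
    field_simp [hs₁, hs₂]
    rw [hs₁, hs₂, mul_sub, mul_div_cancel₀ _ hc.ne', mul_div_cancel₀ _ hc.ne']; ring
  have h1 : t x₁ y₁ - t x₂ y₂ = τ * α * (s₁ ^ β - s₂ ^ β) := by
    rw [ht, ht]; ring
  have h2 : t y₁ x₁ - t y₂ x₂ = τ * α * (s₁ ^ β - s₂ ^ β) := by
    rw [ht, ht, hs₁, hs₂, add_comm y₁ x₁, add_comm y₂ x₂]; ring
  rw [h1, h2]
  have : τ * α * (s₁ ^ β - s₂ ^ β) * (x₁ - x₂) + τ * α * (s₁ ^ β - s₂ ^ β) * (y₁ - y₂)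
      = τ * α * c * ((s₁ ^ β - s₂ ^ β) * (s₁ - s₂)) := by
    rw [show τ * α * (s₁ ^ β - s₂ ^ β) * (x₁ - x₂) + τ * α * (s₁ ^ β - s₂ ^ β) * (y₁ - y₂)
        = τ * α * (s₁ ^ β - s₂ ^ β) * ((x₁ - x₂) + (y₁ - y₂)) by ring, hdiff]
    ring
  rw [this]
  positivity
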